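/- arXiv:2202.11093 — 3 statements merged into one kernel-verified Lean document; each statement's English description precedes it below -/
import Mathlib

section
/- The only finitely generated normal subgroup of infinite index in a free group is the trivial subgroup. -/
namespace Stmt5Aux

variable {S : Type*} (N : Subgroup (FreeGroup S)) [N.Normal]

noncomputable section

abbrev Q := FreeGroup S ⧸ N

abbrev A := (S × Q N) →₀ ℤ

def pr : FreeGroup S →* Q N := QuotientGroup.mk' N

def shift (q : Q N) : A N ≃+ A N :=
  Finsupp.domCongr (Equiv.prodCongr (Equiv.refl S) (Equiv.mulLeft q))

variable {N}

lemma shift_single (q q' : Q N) (s : S) (z : ℤ) :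
    shift N q (Finsupp.single (s, q') z) = Finsupp.single (s, q * q') z := by
  simp [shift, Finsupp.equivMapDomain_single]

lemma shift_apply (q : Q N) (a : A N) (s : S) (x : Q N) :
    shift N q a (s, x) = a (s, q⁻¹ * x) := by
  simp [shift, Finsupp.equivMapDomain_apply]

lemma shift_shift (q q' : Q N) (a : A N) :
    shift N q (shift N q' a) = shift N (q * q') a := by
  ext ⟨s, x⟩
  simp [shift_apply, mul_inv_rev, mul_assoc]

lemma shift_one (a : A N) : shift N 1 a = a := by
  ext ⟨s, x⟩
  simp [shift_apply]

variable (N)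

def Phi : FreeGroup S →* Equiv.Perm (A N) :=
  FreeGroup.lift fun s =>
    ((shift N (pr N (FreeGroup.of s))).toEquiv.trans
      (Equiv.addLeft (Finsupp.single ((s, 1) : S × Q N) (1 : ℤ))))

def dd (w : FreeGroup S) : A N := Phi N w 0

variable {N}

lemma Phi_of (s : S) (a : A N) :
    Phi N (FreeGroup.of s) a = Finsupp.single (s, 1) 1 + shift N (pr N (FreeGroup.of s)) a := by
  simp [Phi, FreeGroup.lift_apply_of]

lemma Phi_apply (w : FreeGroup S) :
    ∀ a : A N, Phi N w a = dd N w + shift N (pr N w) a := by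
  induction w using FreeGroup.induction_on with
  | C1 => intro a; simp [dd, _root_.map_one, shift_one]
  | of s =>
    intro a
    show Phi N (FreeGroup.of s) a = dd N (FreeGroup.of s) + shift N (pr N (FreeGroup.of s)) a
    rw [Phi_of]
    congr 1
    simp [dd, Phi_of]
  | inv_of s _ =>
    intro a
    show Phi N (FreeGroup.of s)⁻¹ a
        = dd N (FreeGroup.of s)⁻¹ + shift N (pr N (FreeGroup.of s)⁻¹) a
    have key : ∀ b : A N, Phi N (FreeGroup.of s) (Phi N (FreeGroup.of s)⁻¹ b) = b := by
      intro b
      rw [← Equiv.Perm.mul_apply, ← _root_.map_mul, mul_inv_cancel, _root_.map_one,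
        Equiv.Perm.one_apply]
    have h1 : Phi N (FreeGroup.of s) (dd N (FreeGroup.of s)⁻¹) = 0 := key 0
    rw [Phi_of] at h1
    have h0 : Phi N (FreeGroup.of s)
        (dd N (FreeGroup.of s)⁻¹ + shift N (pr N (FreeGroup.of s)⁻¹) a) = a := by
      rw [Phi_of, _root_.map_add, ← add_assoc, h1, zero_add, shift_shift, _root_.map_inv,
        mul_inv_cancel, shift_one]
    exact (Phi N (FreeGroup.of s)).injective ((key a).trans h0.symm)
  | mul v w hv hw =>
    intro a
    have hdd : dd N (v * w) = dd N v + shift N (pr N v) (dd N w) := by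
      show Phi N (v * w) 0 = _
      rw [_root_.map_mul, Equiv.Perm.mul_apply]
      rw [show Phi N w 0 = dd N w from rfl]
      exact hv (dd N w)
    rw [_root_.map_mul, Equiv.Perm.mul_apply, hw, hv, _root_.map_add, hdd,
      shift_shift, _root_.map_mul, add_assoc]

lemma dd_one : dd N (1 : FreeGroup S) = 0 := by simp [dd, _root_.map_one]

lemma dd_of (s : S) : dd N (FreeGroup.of s) = Finsupp.single (s, 1) 1 := by
  simp [dd, Phi_of]

lemma dd_mul (v w : FreeGroup S) :
    dd N (v * w) = dd N v + shift N (pr N v) (dd N w) := by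
  show Phi N (v * w) 0 = _
  rw [_root_.map_mul, Equiv.Perm.mul_apply, show Phi N w 0 = dd N w from rfl, Phi_apply]

lemma dd_inv (w : FreeGroup S) :
    shift N (pr N w) (dd N w⁻¹) = - dd N w := by
  have h := dd_mul (N := N) w w⁻¹
  rw [mul_inv_cancel, dd_one] at h
  exact (eq_neg_of_add_eq_zero_right h.symm)

lemma pr_mem {n : FreeGroup S} (hn : n ∈ N) : pr N n = 1 := by
  simpa [pr] using (QuotientGroup.eq_one_iff n).mpr hn

lemma dd_conj {n : FreeGroup S} (hn : n ∈ N) (g : FreeGroup S) :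
    dd N (g * n * g⁻¹) = shift N (pr N g) (dd N n) := by
  have h1 : dd N (g * g⁻¹) = 0 := by rw [mul_inv_cancel, dd_one]
  rw [dd_mul] at h1
  rw [dd_mul, dd_mul, _root_.map_mul, pr_mem hn, mul_one]
  rw [add_comm (dd N g), add_assoc, h1, add_zero]

variable (N)

open Classical in
def sec (q : Q N) : FreeGroup S := if q = 1 then 1 else q.out

variable {N}

lemma sec_one : sec N 1 = 1 := if_pos rfl

lemma pr_sec (q : Q N) : pr N (sec N q) = q := by
  unfold sec
  split
  · rename_i h; rw [h, _root_.map_one]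
  · exact QuotientGroup.out_eq' q

lemma mem_of_pr_eq {a b : FreeGroup S} (h : pr N a = pr N b) : a * b⁻¹ ∈ N := by
  have : pr N (a * b⁻¹) = 1 := by
    rw [_root_.map_mul, _root_.map_inv, h, mul_inv_cancel]
  rwa [pr, QuotientGroup.mk'_apply, QuotientGroup.eq_one_iff] at this

variable (N)

def nu (w : FreeGroup S) : ↥N :=
  ⟨w * (sec N (pr N w))⁻¹, mem_of_pr_eq (by rw [pr_sec])⟩

def beta (p : S × Q N) : Additive (Abelianization ↥N) :=
  Additive.ofMul (Abelianization.of
    (⟨sec N p.2 * FreeGroup.of p.1 * (sec N (p.2 * pr N (FreeGroup.of p.1)))⁻¹,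
      mem_of_pr_eq (by rw [_root_.map_mul, pr_sec, pr_sec])⟩ : ↥N))

def rho : A N →+ Additive (Abelianization ↥N) :=
  Finsupp.liftAddHom fun p => zmultiplesHom _ (beta N p)

variable {N}

lemma rho_single (p : S × Q N) : rho N (Finsupp.single p 1) = beta N p := by
  rw [rho, Finsupp.liftAddHom_apply_single, zmultiplesHom_apply, one_zsmul]

lemma mk_single_false (s : S) :
    FreeGroup.mk [(s, false)] = (FreeGroup.of s)⁻¹ := by
  have : (FreeGroup.of s : FreeGroup S) = FreeGroup.mk [(s, true)] := rfl
  rw [this, FreeGroup.inv_mk]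
  simp [FreeGroup.invRev]

lemma rho_dd (w : FreeGroup S) :
    rho N (dd N w) = Additive.ofMul (Abelianization.of (nu N w)) := by
  classical
  rw [← FreeGroup.mk_toWord (x := w)]
  generalize w.toWord = l
  induction l using List.reverseRecOn with
  | nil =>
    rw [← FreeGroup.one_eq_mk, dd_one, _root_.map_zero]
    have h1 : nu N (1 : FreeGroup S) = 1 := by
      apply Subtype.ext
      simp [nu, _root_.map_one, sec_one]
    rw [h1, _root_.map_one, ofMul_one]
  | append_singleton l x ih =>
    obtain ⟨s, b⟩ := x
    rw [← FreeGroup.mul_mk]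
    cases b
    · -- multiply by (of s)⁻¹
      have hdds : dd N ((FreeGroup.of s)⁻¹ : FreeGroup S)
          = - Finsupp.single (s, (pr N (FreeGroup.of s))⁻¹) (1 : ℤ) := by
        have h := dd_inv (N := N) (FreeGroup.of s)
        have h2 := congrArg (shift N (pr N (FreeGroup.of s))⁻¹) h
        rw [shift_shift, inv_mul_cancel, shift_one, _root_.map_neg, dd_of, shift_single,
          mul_one] at h2
        exact h2
      rw [mk_single_false, dd_mul, hdds, _root_.map_neg, shift_single, _root_.map_add, ih,
        _root_.map_neg, rho_single, beta, ← ofMul_inv, ← _root_.map_inv, ← ofMul_mul,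
        ← _root_.map_mul]
      refine congrArg _ (congrArg _ (Subtype.ext ?_))
      simp only [nu, MulMemClass.coe_mul, InvMemClass.coe_inv]
      rw [_root_.map_mul, _root_.map_inv, inv_mul_cancel_right]
      group
    · -- multiply by of s
      have hof : FreeGroup.mk [(s, true)] = FreeGroup.of s := rfl
      rw [hof, dd_mul, _root_.map_add, ih, dd_of, shift_single, mul_one, rho_single, beta,
        ← ofMul_mul, ← _root_.map_mul]
      refine congrArg _ (congrArg _ (Subtype.ext ?_))
      simp only [nu, MulMemClass.coe_mul]
      rw [_root_.map_mul]
      group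

lemma dd_eq_zero_of_fg (hfg : N.FG) (hQ : Infinite (Q N)) {n : FreeGroup S} (hn : n ∈ N) :
    dd N n = 0 := by
  classical
  obtain ⟨X, hX⟩ := hfg
  set K := X.sup fun x => (dd N x).support with hK
  have hsupp : ∀ m ∈ N, (dd N m).support ⊆ K := by
    intro m hm
    rw [← hX] at hm
    induction hm using Subgroup.closure_induction with
    | mem x hx => exact Finset.le_sup (f := fun x => (dd N x).support) hx
    | one => simp [dd_one]
    | mul x y hx hy ihx ihy =>
      have hxN : x ∈ N := hX ▸ hx
      rw [dd_mul, pr_mem hxN, shift_one]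
      exact Finsupp.support_add.trans (Finset.union_subset ihx ihy)
    | inv x hx ihx =>
      have hxN : x ∈ N := hX ▸ hx
      have h := dd_inv (N := N) x
      rw [pr_mem hxN, shift_one] at h
      rw [h, Finsupp.support_neg]
      exact ihx
  by_contra hne
  obtain ⟨⟨s₀, q₀⟩, hp⟩ := Finsupp.support_nonempty_iff.mpr hne
  have hinj : Function.Injective (fun q : Q N => ((s₀, q * q₀) : S × Q N)) := by
    intro a b hab
    have := congrArg Prod.snd hab
    exact mul_right_cancel this
  have hfin : {q : Q N | ((s₀, q * q₀) : S × Q N) ∈ (K : Set (S × Q N))}.Finite :=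
    K.finite_toSet.preimage hinj.injOn
  obtain ⟨q, hq⟩ := hfin.infinite_compl.nonempty
  have hgn : (sec N q) * n * (sec N q)⁻¹ ∈ N :=
    Subgroup.Normal.conj_mem ‹N.Normal› n hn (sec N q)
  have h1 : (dd N ((sec N q) * n * (sec N q)⁻¹)).support ⊆ K := hsupp _ hgn
  rw [dd_conj hn, pr_sec] at h1
  have h2 : ((s₀, q * q₀) : S × Q N) ∈ (shift N q (dd N n)).support := by
    rw [Finsupp.mem_support_iff, shift_apply]
    have hc : q⁻¹ * (q * q₀) = q₀ := by group
    rw [hc]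
    exact Finsupp.mem_support_iff.mp hp
  exact hq (h1 h2)

end

end Stmt5Aux

theorem stmt5 (S : Type*) (N : Subgroup (FreeGroup S)) [N.Normal]
    (hfg : N.FG) (hidx : N.index = 0) : N = ⊥ := by
  have hQ : Infinite (FreeGroup S ⧸ N) := by
    have h0 : Nat.card (FreeGroup S ⧸ N) = 0 := hidx
    rcases Nat.card_eq_zero.mp h0 with h | h
    · exact (h.false (1 : FreeGroup S ⧸ N)).elim
    · exact h
  have hz : ∀ n ∈ N, Stmt5Aux.dd N n = 0 := fun n hn =>
    Stmt5Aux.dd_eq_zero_of_fg hfg hQ hn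
  have hab : ∀ x : ↥N, Abelianization.of x = 1 := by
    intro x
    have h1 := Stmt5Aux.rho_dd (N := N) x.1
    rw [hz x.1 x.2, _root_.map_zero] at h1
    have h2 : Stmt5Aux.nu N (x : FreeGroup S) = x := by
      apply Subtype.ext
      show (x : FreeGroup S) * (Stmt5Aux.sec N (Stmt5Aux.pr N x))⁻¹ = x
      rw [Stmt5Aux.pr_mem x.2, Stmt5Aux.sec_one, inv_one, mul_one]
    rw [h2] at h1
    simpa using congrArg Additive.toMul h1.symm
  by_contra hne
  obtain ⟨n, hn, hn1⟩ : ∃ n ∈ N, n ≠ 1 := by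
    by_contra hc
    push_neg at hc
    exact hne ((Subgroup.eq_bot_iff_forall N).mpr hc)
  obtain ⟨ι, ⟨b⟩⟩ := (inferInstance : IsFreeGroup ↥N).nonempty_basis
  rcases isEmpty_or_nonempty ι with h | h
  · have htriv : ∀ x : FreeGroup ι, x = 1 := by
      intro x
      induction x using FreeGroup.induction_on with
      | C1 => rfl
      | of i => exact isEmptyElim i
      | inv_of i _ => exact isEmptyElim i
      | mul a c ha hc => rw [ha, hc, one_mul]
    have hx1 : (⟨n, hn⟩ : ↥N) = 1 := by
      apply b.repr.injective
      rw [_root_.map_one]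
      exact htriv _
    exact hn1 (congrArg Subtype.val hx1)
  · obtain ⟨i⟩ := h
    let f : ↥N →* Multiplicative ℤ :=
      (FreeGroup.lift fun _ => Multiplicative.ofAdd (1 : ℤ)).comp b.repr.toMonoidHom
    have hf1 : ∀ x : ↥N, f x = 1 := by
      intro x
      have hfx : f x = Abelianization.lift f (Abelianization.of x) :=
        (Abelianization.lift_apply_of f x).symm
      rw [hfx, hab x, _root_.map_one]
    have hf2 : f (b.repr.symm (FreeGroup.of i)) = Multiplicative.ofAdd (1 : ℤ) := by
      simp [f, FreeGroup.lift_apply_of]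
    rw [hf1] at hf2
    have : (0 : ℤ) = 1 := congrArg Multiplicative.toAdd hf2
    norm_num at this
end

section
/- If a free group F fits into a short exact sequence 1 → N → F → ℤ^m → 1 with N finitely generated and m ≥ 1, then F is infinite cyclic and m = 1 (equivalently, the rank of F is 1). -/
set_option maxHeartbeats 1000000

open FreeGroup List

variable {α : Type*} [DecidableEq α]

/-- The `φ`-value of a word. -/
def psiW (φ : FreeGroup α →* Multiplicative ℤ) (L : List (α × Bool)) : ℤ :=
  Multiplicative.toAdd (φ (FreeGroup.mk L))

lemma psiW_append (φ : FreeGroup α →* Multiplicative ℤ) (L₁ L₂ : List (α × Bool)) :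
    psiW φ (L₁ ++ L₂) = psiW φ L₁ + psiW φ L₂ := by
  simp [psiW, ← FreeGroup.mul_mk, map_mul]

lemma psiW_cancel (φ : FreeGroup α →* Multiplicative ℤ) (x : α) (b : Bool)
    (L₁ L₂ : List (α × Bool)) :
    psiW φ (L₁ ++ (x, b) :: (x, !b) :: L₂) = psiW φ (L₁ ++ L₂) := by
  have h : FreeGroup.mk (L₁ ++ (x, b) :: (x, !b) :: L₂) = FreeGroup.mk (L₁ ++ L₂) := by
    rw [← FreeGroup.quot_mk_eq_mk, ← FreeGroup.quot_mk_eq_mk]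
    exact Quot.sound Red.Step.not
  simp [psiW, h]

/-- All prefixes of `L` have `φ`-value bounded by `M`. -/
def BndW (φ : FreeGroup α →* Multiplicative ℤ) (M : ℤ) (L : List (α × Bool)) : Prop :=
  ∀ i, |psiW φ (L.take i)| ≤ M

lemma bndW_step {φ : FreeGroup α →* Multiplicative ℤ} {M : ℤ} {L L' : List (α × Bool)}
    (h : Red.Step L L') (hb : BndW φ M L) : BndW φ M L' := by
  cases h with
  | @not L₁ L₂ x b =>
    intro i
    by_cases hi : i ≤ L₁.length
    · have := hb i
      rw [List.take_append, Nat.sub_eq_zero_of_le hi] at this ⊢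
      simpa using this
    · push_neg at hi
      have := hb (i + 2)
      rw [List.take_append] at this ⊢
      rw [List.take_of_length_le (by omega)] at this ⊢
      have h2 : i + 2 - L₁.length = (i - L₁.length) + 2 := by omega
      rw [h2] at this
      simp only [List.take_succ_cons] at this
      rwa [psiW_cancel] at this

lemma bndW_red {φ : FreeGroup α →* Multiplicative ℤ} {M : ℤ} {L L' : List (α × Bool)}
    (h : Red L L') (hb : BndW φ M L) : BndW φ M L' := by
  induction h with
  | refl => exact hb
  | tail _ h2 ih => exact bndW_step h2 ih

lemma bndW_append {φ : FreeGroup α →* Multiplicative ℤ} {M : ℤ} {L₁ L₂ : List (α × Bool)}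
    (h1 : BndW φ M L₁) (h2 : BndW φ M L₂) (h0 : psiW φ L₁ = 0) : BndW φ M (L₁ ++ L₂) := by
  intro i
  rw [List.take_append]
  by_cases hi : i ≤ L₁.length
  · rw [Nat.sub_eq_zero_of_le hi]
    simpa using h1 i
  · rw [List.take_of_length_le (by omega), psiW_append, h0, zero_add]
    exact h2 _

lemma bndW_invRev {φ : FreeGroup α →* Multiplicative ℤ} {M : ℤ} {L : List (α × Bool)}
    (h : BndW φ M L) (h0 : psiW φ L = 0) : BndW φ M (FreeGroup.invRev L) := by
  have hinv : ∀ X : List (α × Bool), psiW φ (FreeGroup.invRev X) = -psiW φ X := by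
    intro X
    simp [psiW, ← FreeGroup.inv_mk, map_inv]
  intro i
  by_cases hi : i ≤ L.length
  · have htake : (FreeGroup.invRev L).take i = FreeGroup.invRev (L.drop (L.length - i)) := by
      unfold FreeGroup.invRev
      rw [List.take_reverse, ← List.map_drop]
      congr 2
      simp
    rw [htake, hinv]
    have : psiW φ (L.drop (L.length - i)) = psiW φ L - psiW φ (L.take (L.length - i)) := by
      have := psiW_append φ (L.take (L.length - i)) (L.drop (L.length - i))
      rw [List.take_append_drop] at this
      omega
    rw [this, h0]
    simpa using h (L.length - i)
  · rw [List.take_of_length_le (by simp [FreeGroup.invRev]; omega), hinv, h0]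
    have := h 0
    simpa [psiW, ← FreeGroup.one_eq_mk] using this

lemma reduce_eq_self_of_chain' {L : List (α × Bool)}
    (h : List.Chain' (fun a b : α × Bool => ¬(a.1 = b.1 ∧ a.2 = !b.2)) L) :
    FreeGroup.reduce L = L := by
  induction L with
  | nil => rfl
  | cons x L ih =>
    rw [FreeGroup.reduce.cons, ih h.tail]
    cases L with
    | nil => rfl
    | cons y T =>
      have hxy := (List.isChain_cons_cons.mp h).1
      simp only [if_neg hxy]

/-- Elements of the kernel of `φ` all of whose prefixes have `φ`-value bounded by `M`. -/
def bndSubgroup (φ : FreeGroup α →* Multiplicative ℤ) (M : ℤ) (hM : 0 ≤ M) :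
    Subgroup (FreeGroup α) where
  carrier := {g | φ g = 1 ∧ BndW φ M g.toWord}
  one_mem' := by
    refine ⟨map_one φ, ?_⟩
    intro i
    simp [FreeGroup.toWord_one, psiW, ← FreeGroup.one_eq_mk, hM]
  mul_mem' := by
    rintro a b ⟨ha1, ha2⟩ ⟨hb1, hb2⟩
    refine ⟨by rw [_root_.map_mul, ha1, hb1, one_mul], ?_⟩
    have hab : a * b = FreeGroup.mk (a.toWord ++ b.toWord) := by
      rw [← FreeGroup.mul_mk, FreeGroup.mk_toWord, FreeGroup.mk_toWord]
    rw [hab, FreeGroup.toWord_mk]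
    exact bndW_red FreeGroup.reduce.red
      (bndW_append ha2 hb2 (by simp [psiW, FreeGroup.mk_toWord, ha1]))
  inv_mem' := by
    rintro a ⟨h1, h2⟩
    refine ⟨by rw [_root_.map_inv, h1, inv_one], ?_⟩
    rw [FreeGroup.toWord_inv]
    exact bndW_invRev h2 (by simp [psiW, FreeGroup.mk_toWord, h1])

lemma exists_prefix_bound {α : Type*} [DecidableEq α] (f : List (α × Bool) → ℤ)
    (S : Finset (FreeGroup α)) :
    ∃ M : ℕ, ∀ s ∈ S, ∀ i, |f (s.toWord.take i)| ≤ (M : ℤ) := by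
  refine ⟨S.sup fun s =>
    (Finset.range (s.toWord.length + 1)).sup fun i => (|f (s.toWord.take i)|).toNat, ?_⟩
  have key : ∀ s ∈ S, ∀ i, i ≤ s.toWord.length → |f (s.toWord.take i)| ≤
      ((S.sup fun s => (Finset.range (s.toWord.length + 1)).sup
        fun i => (|f (s.toWord.take i)|).toNat : ℕ) : ℤ) := by
    intro s hs i hi
    have hA : (|f (s.toWord.take i)|).toNat ≤
        (Finset.range (s.toWord.length + 1)).sup
          (fun i => (|f (s.toWord.take i)|).toNat) :=
      Finset.le_sup (f := fun i => (|f (s.toWord.take i)|).toNat)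
        (Finset.mem_range.2 (by omega))
    have hB : (Finset.range (s.toWord.length + 1)).sup
          (fun i => (|f (s.toWord.take i)|).toNat) ≤
        S.sup fun s => (Finset.range (s.toWord.length + 1)).sup
          fun i => (|f (s.toWord.take i)|).toNat :=
      Finset.le_sup (f := fun s => (Finset.range (s.toWord.length + 1)).sup
        fun i => (|f (s.toWord.take i)|).toNat) hs
    have h2 : |f (s.toWord.take i)| = ((|f (s.toWord.take i)|).toNat : ℤ) :=
      (Int.toNat_of_nonneg (abs_nonneg _)).symm
    rw [h2]
    exact_mod_cast hA.trans hB
  intro s hs i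
  by_cases hi : i ≤ s.toWord.length
  · exact key s hs i hi
  · rw [List.take_of_length_le (by omega)]
    have := key s hs s.toWord.length le_rfl
    rwa [List.take_length] at this


lemma comm_eq_one {G : Type*} [CommGroup G] (A B : G) : A * B * A⁻¹ * B⁻¹ = 1 := by
  rw [mul_comm A B, mul_inv_cancel_right, mul_inv_cancel]

lemma no_rank_ge_two (n m : ℕ) (hn : 2 ≤ n) (hm : 1 ≤ m)
    (N : Subgroup (FreeGroup (Fin n))) [N.Normal] (hfg : N.FG)
    (e : (FreeGroup (Fin n) ⧸ N) ≃* Multiplicative (Fin m → ℤ)) : False := by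
  set q : FreeGroup (Fin n) →* Multiplicative (Fin m → ℤ) :=
    e.toMonoidHom.comp (QuotientGroup.mk' N) with hq
  have hqsurj : Function.Surjective q := e.surjective.comp (QuotientGroup.mk'_surjective N)
  have hker : ∀ g, q g = 1 ↔ g ∈ N := by
    intro g
    rw [hq, MonoidHom.comp_apply, MulEquiv.coe_toMonoidHom, map_eq_one_iff _ e.injective,
      ← QuotientGroup.eq_one_iff]
    rfl
  -- find a generator with nontrivial image
  have hz : ∃ z : Fin n, q (FreeGroup.of z) ≠ 1 := by
    by_contra hcon
    push_neg at hcon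
    have htriv : ∀ g, q g = 1 := by
      intro g
      induction g using FreeGroup.induction_on with
      | C1 => exact map_one q
      | of x => exact hcon x
      | inv_of x ih => rw [_root_.map_inv, ih, inv_one]
      | mul x y ihx ihy => rw [_root_.map_mul, ihx, ihy, one_mul]
    obtain ⟨g, hg⟩ := hqsurj (Multiplicative.ofAdd (Pi.single (⟨0, by omega⟩ : Fin m) 1))
    rw [htriv g] at hg
    have := congrFun (congrArg Multiplicative.toAdd hg) ⟨0, by omega⟩
    simp at this
  obtain ⟨z, hz⟩ := hz
  have hj : ∃ j : Fin m, Multiplicative.toAdd (q (FreeGroup.of z)) j ≠ 0 := by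
    by_contra hcon
    push_neg at hcon
    apply hz
    have : Multiplicative.toAdd (q (FreeGroup.of z)) = 0 := funext hcon
    simpa using this
  obtain ⟨j, hcj⟩ := hj
  set φ : FreeGroup (Fin n) →* Multiplicative ℤ :=
    (AddMonoidHom.toMultiplicative (Pi.evalAddMonoidHom (fun _ : Fin m => ℤ) j)).comp q with hφ
  set c : ℤ := Multiplicative.toAdd (φ (FreeGroup.of z)) with hc
  have hcne : c ≠ 0 := hcj
  have hφN : ∀ g ∈ N, φ g = 1 := by
    intro g hg
    rw [hφ, MonoidHom.comp_apply, (hker g).2 hg, _root_.map_one]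
  -- bound from the finite generating set
  obtain ⟨S, hS⟩ := hfg
  obtain ⟨M, hMbnd⟩ := exists_prefix_bound (psiW φ) S
  have hSbnd : ∀ s ∈ S, BndW φ (M : ℤ) s.toWord := fun s hs i => hMbnd s hs i
  have hNle : N ≤ bndSubgroup φ (M : ℤ) (by positivity) := by
    rw [← hS]
    rw [Subgroup.closure_le]
    intro s hs
    exact ⟨hφN s (hS ▸ Subgroup.subset_closure hs), hSbnd s hs⟩
  -- the witness
  set u : Fin n := if z = ⟨0, by omega⟩ then ⟨1, by omega⟩ else ⟨0, by omega⟩ with hu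
  have huz : u ≠ z := by
    rw [hu]
    split_ifs with h
    · rw [h]; intro hcon; exact absurd (congrArg Fin.val hcon) (by simp)
    · exact fun hcon => h hcon.symm
  set k : ℕ := M + 1 with hk
  set w : FreeGroup (Fin n) :=
    (FreeGroup.of z) ^ k * FreeGroup.of u * ((FreeGroup.of z) ^ k)⁻¹ * (FreeGroup.of u)⁻¹
    with hw
  have hwN : w ∈ N := by
    rw [← hker, hw, _root_.map_mul, _root_.map_mul, _root_.map_mul, _root_.map_inv,
      _root_.map_inv]
    exact comm_eq_one _ _
  set Lk : List (Fin n × Bool) :=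
    List.replicate k (z, true) ++ (u, true) :: (List.replicate k (z, false) ++ [(u, false)])
    with hLk
  have hmkw : w = FreeGroup.mk Lk := by
    have h1 : (FreeGroup.of z) ^ k = FreeGroup.mk (List.replicate k (z, true)) := by
      rw [← FreeGroup.toWord_of_pow, FreeGroup.mk_toWord]
    have h2 : ((FreeGroup.of z) ^ k)⁻¹ = FreeGroup.mk (List.replicate k (z, false)) := by
      rw [h1, FreeGroup.inv_mk]
      congr 1
      simp [FreeGroup.invRev, List.map_replicate]
    have h3 : FreeGroup.of u = FreeGroup.mk [(u, true)] := rfl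
    have h4 : (FreeGroup.of u)⁻¹ = FreeGroup.mk [(u, false)] := by
      rw [h3, FreeGroup.inv_mk]
      simp [FreeGroup.invRev]
    rw [hw, h2, h1, h4, h3, FreeGroup.mul_mk, FreeGroup.mul_mk, FreeGroup.mul_mk, hLk]
    congr 1
    simp
  have hchain : List.Chain' (fun a b : Fin n × Bool => ¬(a.1 = b.1 ∧ a.2 = !b.2)) Lk := by
    rw [hLk]
    apply List.IsChain.append
    · exact List.isChain_replicate_of_rel _ (by simp)
    · rw [List.isChain_cons]
      refine ⟨?_, ?_⟩
      · intro y hy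
        rw [List.head?_append] at hy
        rcases k with _ | k'
        · omega
        · rw [List.head?_replicate] at hy
          simp at hy
          rw [← hy]
          simpa using fun h => absurd h huz
      · apply List.IsChain.append
        · exact List.isChain_replicate_of_rel _ (by simp)
        · simp
        · intro x hx y hy
          rcases k with _ | k'
          · simp at hx
          · rw [List.getLast?_replicate] at hx
            simp at hx hy
            rw [← hx, ← hy]
            simpa using fun h => absurd h huz
    · intro x hx y hy
      rcases k with _ | k'
      · simp at hx
      · rw [List.getLast?_replicate] at hx
        simp at hx hy
        rw [← hx, ← hy]
        simpa using fun h => absurd h huz.symm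
  have hword : w.toWord = Lk := by
    rw [hmkw, FreeGroup.toWord_mk, reduce_eq_self_of_chain' hchain]
  have hbnd : BndW φ (M : ℤ) w.toWord := (hNle hwN).2
  have hcontra := hbnd k
  rw [hword, hLk] at hcontra
  have htake : (List.replicate k (z, true) ++
      (u, true) :: (List.replicate k (z, false) ++ [(u, false)])).take k
      = List.replicate k (z, true) := by
    rw [List.take_append, List.take_of_length_le (by simp),
      List.length_replicate, Nat.sub_self, List.take_zero, List.append_nil]
  rw [htake] at hcontra
  have hval : psiW φ (List.replicate k (z, true)) = (k : ℤ) * c := by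
    have : FreeGroup.mk (List.replicate k (z, true)) = (FreeGroup.of z) ^ k := by
      rw [← FreeGroup.toWord_of_pow, FreeGroup.mk_toWord]
    rw [psiW, this, map_pow, toAdd_pow, hc, nsmul_eq_mul]
  rw [hval] at hcontra
  have h1c : (1 : ℤ) ≤ |c| := Int.one_le_abs hcne
  have : |(k : ℤ) * c| = (k : ℤ) * |c| := by
    rw [abs_mul, Nat.abs_cast]
  rw [this] at hcontra
  have hfin : (M : ℤ) + 1 ≤ (M : ℤ) := by
    calc (M : ℤ) + 1 = (k : ℤ) * 1 := by rw [hk]; push_cast; ring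
      _ ≤ (k : ℤ) * |c| := by
          apply mul_le_mul_of_nonneg_left h1c (by positivity)
      _ ≤ (M : ℤ) := hcontra
  omega

theorem stmt6 (n m : ℕ) (hn : 1 ≤ n) (hm : 1 ≤ m)
    (N : Subgroup (FreeGroup (Fin n))) [N.Normal] (hfg : N.FG)
    (e : (FreeGroup (Fin n) ⧸ N) ≃* Multiplicative (Fin m → ℤ)) :
    n = 1 ∧ m = 1 := by
  rcases Nat.lt_or_ge n 2 with h2 | h2
  · have hn1 : n = 1 := by omega
    subst hn1
    refine ⟨rfl, ?_⟩
    by_contra hm1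
    have hm2 : 2 ≤ m := by omega
    haveI : NeZero m := ⟨by omega⟩
    set q : FreeGroup (Fin 1) →* Multiplicative (Fin m → ℤ) :=
      e.toMonoidHom.comp (QuotientGroup.mk' N) with hq
    have hqsurj : Function.Surjective q := e.surjective.comp (QuotientGroup.mk'_surjective N)
    have hcyc : ∀ g : FreeGroup (Fin 1), ∃ k : ℤ,
        q g = (q (FreeGroup.of 0)) ^ k := by
      intro g
      induction g using FreeGroup.induction_on with
      | C1 => exact ⟨0, by simp⟩
      | of x =>
        refine ⟨1, ?_⟩
        rw [zpow_one]
        have hx : x = 0 := Subsingleton.elim x 0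
        rw [hx]
      | inv_of x ih =>
        obtain ⟨k, hk⟩ := ih
        exact ⟨-k, by rw [_root_.map_inv, hk, zpow_neg]⟩
      | mul x y ihx ihy =>
        obtain ⟨k, hk⟩ := ihx
        obtain ⟨l, hl⟩ := ihy
        exact ⟨k + l, by rw [_root_.map_mul, hk, hl, zpow_add]⟩
    obtain ⟨g1, hg1⟩ := hqsurj (Multiplicative.ofAdd (Pi.single (0 : Fin m) 1))
    obtain ⟨g2, hg2⟩ := hqsurj (Multiplicative.ofAdd (Pi.single (1 : Fin m) 1))
    obtain ⟨k, hk⟩ := hcyc g1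
    obtain ⟨l, hl⟩ := hcyc g2
    set v : Fin m → ℤ := Multiplicative.toAdd (q (FreeGroup.of 0)) with hv
    have h01 : (0 : Fin m) ≠ 1 := by
      intro h
      have hval : ((1 : Fin m) : ℕ) = 1 := by
        rw [Fin.val_one']
        exact Nat.mod_eq_of_lt (by omega)
      have := congrArg Fin.val h
      rw [hval] at this
      simp at this
    have e1 : k • v = Pi.single (0 : Fin m) (1 : ℤ) := by
      rw [hk] at hg1
      have h' := congrArg Multiplicative.toAdd hg1
      rwa [toAdd_zpow, toAdd_ofAdd] at h'
    have e2 : l • v = Pi.single (1 : Fin m) (1 : ℤ) := by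
      rw [hl] at hg2
      have h' := congrArg Multiplicative.toAdd hg2
      rwa [toAdd_zpow, toAdd_ofAdd] at h'
    have A0 : k * v 0 = 1 := by
      have := congrFun e1 0
      simpa using this
    have A1 : k * v 1 = 0 := by
      have := congrFun e1 1
      simpa [Pi.single_apply, h01.symm] using this
    have B0 : l * v 0 = 0 := by
      have := congrFun e2 0
      simpa [Pi.single_apply, h01] using this
    have B1 : l * v 1 = 1 := by
      have := congrFun e2 1
      simpa using this
    have hcontra : (1 : ℤ) = 0 := by
      calc (1 : ℤ) = (k * v 0) * (l * v 1) := by rw [A0, B1]; ring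
        _ = (k * v 1) * (l * v 0) := by ring
        _ = 0 := by rw [A1, zero_mul]
    exact one_ne_zero hcontra
  · exact (no_rank_ge_two n m h2 hm N hfg e).elim
end

section
/- Suppose every infinite-index subgroup of a group G is free and G is not free. If G splits as a nontrivial free product G = A * B, then one obtains a contradiction; hence G does not split as a nontrivial free product. -/
def IsFree (G : Type*) [Group G] : Prop := ∃ S : Type, Nonempty (G ≃* FreeGroup S)

namespace Stmt12Aux

open Monoid Monoid.CoprodI

variable {ι : Type*} {M : ι → Type*} [∀ i, Group (M i)]

/-- The alternating word `(a b)^(k+1)` as a `NeWord`. -/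
def altWord {i j : ι} (hij : i ≠ j) (a : M i) (ha : a ≠ 1) (b : M j) (hb : b ≠ 1) :
    ℕ → NeWord M i j
  | 0 => NeWord.append (NeWord.singleton a ha) hij (NeWord.singleton b hb)
  | (k + 1) => NeWord.append (altWord hij a ha b hb k) hij.symm
      (NeWord.append (NeWord.singleton a ha) hij (NeWord.singleton b hb))

lemma altWord_prod {i j : ι} (hij : i ≠ j) (a : M i) (ha : a ≠ 1) (b : M j) (hb : b ≠ 1)
    (k : ℕ) :
    (altWord hij a ha b hb k).prod = (CoprodI.of a * CoprodI.of b) ^ (k + 1) := by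
  induction k with
  | zero => simp [altWord]
  | succ k ih => simp [altWord, ih, pow_succ]

lemma altWord_length {i j : ι} (hij : i ≠ j) (a : M i) (ha : a ≠ 1) (b : M j) (hb : b ≠ 1)
    (k : ℕ) :
    (altWord hij a ha b hb k).toList.length = 2 * (k + 1) := by
  induction k with
  | zero => simp [altWord, NeWord.toList]
  | succ k ih => simp [altWord, NeWord.toList, ih]; omega

lemma range_index_eq_zero {i j : ι} (hij : i ≠ j) [Nontrivial (M i)] [Nontrivial (M j)] :
    (CoprodI.of (M := M) (i := i)).range.index = 0 := by
  classical
  obtain ⟨a, ha⟩ := exists_ne (1 : M i)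
  obtain ⟨b, hb⟩ := exists_ne (1 : M j)
  set c : CoprodI M := CoprodI.of a * CoprodI.of b with hc
  have hinj : Function.Injective (Word.prod : Word M → CoprodI M) :=
    fun u v huv => (Word.equiv (M := M)).symm.injective huv
  have key : ∀ k : ℕ, c ^ k ∈ (CoprodI.of (M := M) (i := i)).range → k = 0 := by
    intro k hk
    by_contra h0
    obtain ⟨k, rfl⟩ := Nat.exists_eq_succ_of_ne_zero h0
    obtain ⟨x, hx⟩ := hk
    have hw : ((altWord hij a ha b hb k).toWord).prod = CoprodI.of x := by
      rw [hx]
      exact altWord_prod hij a ha b hb k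
    have hlen : ((altWord hij a ha b hb k).toWord).toList.length = 2 * (k + 1) :=
      altWord_length hij a ha b hb k
    by_cases hx1 : x = 1
    · have h1 : ((altWord hij a ha b hb k).toWord) = Word.empty := by
        apply hinj
        rw [hw, hx1, Word.prod_empty, map_one]
      rw [h1] at hlen
      simp [Word.empty] at hlen
    · have h2 : ((NeWord.singleton x hx1).toWord).prod = CoprodI.of x :=
        NeWord.prod_singleton x hx1
      have h1 : ((altWord hij a ha b hb k).toWord) = (NeWord.singleton x hx1).toWord :=
        hinj (hw.trans h2.symm)
      rw [h1] at hlen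
      simp [NeWord.toWord, NeWord.toList] at hlen
      omega
  rw [Subgroup.index, Nat.card_eq_zero]
  refine Or.inr (Infinite.of_injective
    (fun k : ℕ => (QuotientGroup.mk (c ^ k) :
      CoprodI M ⧸ (CoprodI.of (M := M) (i := i)).range)) ?_)
  have main : ∀ m n : ℕ, m ≤ n →
      (QuotientGroup.mk (c ^ m) : CoprodI M ⧸ (CoprodI.of (M := M) (i := i)).range) =
        QuotientGroup.mk (c ^ n) → m = n := by
    intro m n hmn heq
    have hmem := QuotientGroup.eq.mp heq
    have hpow : (c ^ m)⁻¹ * c ^ n = c ^ (n - m) := by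
      have : c ^ n = c ^ m * c ^ (n - m) := by
        rw [← pow_add, Nat.add_sub_cancel' hmn]
      rw [this, inv_mul_cancel_left]
    rw [hpow] at hmem
    have := key (n - m) hmem
    omega
  intro m n hmn
  rcases le_total m n with hle | hle
  · exact main m n hle hmn
  · exact (main n m hle hmn.symm).symm

end Stmt12Aux

theorem stmt12 (G : Type*) [Group G]
    (h : ∀ H : Subgroup G, H.index = 0 → IsFree H) (hG : ¬ IsFree G) :
    ¬ ∃ (A B : Type) (_ : Group A) (_ : Group B) (_ : Nontrivial A) (_ : Nontrivial B),
      Nonempty (G ≃* Monoid.Coprod A B) := by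
  rintro ⟨A, B, _, _, _, _, ⟨e⟩⟩
  classical
  -- The two-element family of groups
  let F : Bool → Type := fun b => cond b A B
  letI instF : ∀ b, Group (F b) := fun b => by cases b with
    | false => exact ‹Group B›
    | true => exact ‹Group A›
  haveI instNT : ∀ b, Nontrivial (F b) := fun b => by cases b with
    | false => exact ‹Nontrivial B›
    | true => exact ‹Nontrivial A›
  -- The iso between the binary coproduct and the indexed coproduct
  let φ : Monoid.Coprod A B →* Monoid.CoprodI F :=
    Monoid.Coprod.lift (Monoid.CoprodI.of (M := F) (i := true))
      (Monoid.CoprodI.of (M := F) (i := false))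
  let χ : Monoid.CoprodI F →* Monoid.Coprod A B :=
    Monoid.CoprodI.lift (fun b => Bool.rec (motive := fun b => F b →* Monoid.Coprod A B)
      Monoid.Coprod.inr Monoid.Coprod.inl b)
  have hφinl : ∀ x : A, φ (Monoid.Coprod.inl x) = Monoid.CoprodI.of (M := F) (i := true) x :=
    fun x => Monoid.Coprod.lift_apply_inl _ _ x
  have hφinr : ∀ x : B, φ (Monoid.Coprod.inr x) = Monoid.CoprodI.of (M := F) (i := false) x :=
    fun x => Monoid.Coprod.lift_apply_inr _ _ x
  have hχtrue : ∀ x : F true,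
      χ (Monoid.CoprodI.of x) = Monoid.Coprod.inl x :=
    fun x => Monoid.CoprodI.lift_of _ x
  have hχfalse : ∀ x : F false,
      χ (Monoid.CoprodI.of x) = Monoid.Coprod.inr x :=
    fun x => Monoid.CoprodI.lift_of _ x
  have h1 : χ.comp φ = MonoidHom.id _ := by
    apply Monoid.Coprod.hom_ext <;> ext x
    · show χ (φ (Monoid.Coprod.inl x)) = Monoid.Coprod.inl x
      rw [hφinl]
      exact hχtrue x
    · show χ (φ (Monoid.Coprod.inr x)) = Monoid.Coprod.inr x
      rw [hφinr]
      exact hχfalse x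
  have h2 : φ.comp χ = MonoidHom.id _ := by
    apply Monoid.CoprodI.ext_hom
    intro i
    ext x
    cases i
    · show φ (χ (Monoid.CoprodI.of x)) = Monoid.CoprodI.of x
      rw [hχfalse]
      exact hφinr x
    · show φ (χ (Monoid.CoprodI.of x)) = Monoid.CoprodI.of x
      rw [hχtrue]
      exact hφinl x
  let ψ : Monoid.Coprod A B ≃* Monoid.CoprodI F := MonoidHom.toMulEquiv φ χ h1 h2
  let E : G ≃* Monoid.CoprodI F := e.trans ψ
  -- Each factor is free
  have hFree : ∀ b : Bool, IsFree (F b) := by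
    intro b
    let K : Subgroup (Monoid.CoprodI F) := (Monoid.CoprodI.of (M := F) (i := b)).range
    have hKidx : K.index = 0 := by
      cases b with
      | false => exact Stmt12Aux.range_index_eq_zero (i := false) (j := true) (by simp)
      | true => exact Stmt12Aux.range_index_eq_zero (i := true) (j := false) (by simp)
    have hHidx : (K.comap E.toMonoidHom).index = 0 := by
      rw [Subgroup.index_comap_of_surjective K E.surjective]
      exact hKidx
    obtain ⟨S, ⟨eS⟩⟩ := h _ hHidx
    have e1 : F b ≃* K := MonoidHom.ofInjective (Monoid.CoprodI.of_injective b)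
    have e2 : K ≃* (K.comap E.toMonoidHom) := by
      have hmap : K.comap E.toMonoidHom = K.map E.symm.toMonoidHom :=
        Subgroup.comap_equiv_eq_map_symm' E K
      exact (MulEquiv.subgroupMap E.symm K).trans (MulEquiv.subgroupCongr hmap.symm)
    exact ⟨S, ⟨(e1.trans e2).trans eS⟩⟩
  -- Hence `CoprodI F` is free, contradiction
  choose S eS using fun b => hFree b
  have basis : ∀ b, FreeGroupBasis (S b) (F b) := fun b => ⟨(eS b).some⟩
  have bigBasis := Monoid.CoprodI.FreeGroupBasis.coprodI basis
  exact hG ⟨Σ b, S b, ⟨E.trans bigBasis.repr⟩⟩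
end
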